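/- (Tree-like property of σ-special sequences) With σ an injective coding as above, if (E_i,2j_i)_{i=1}^n and (F_l,2k_l)_{l=1}^m are two σ-special sequences, then either j_i ≠ k_l for all i ≤ n and l ≤ m, or there exists d ≤ min{n,m} such that (E_i,2j_i) = (F_i,2k_i) for all i ≤ d−1, j_d = k_d but E_d ≠ F_d (or the sequences agree up to position d), and j_i ≠ k_l for all i, l with d+1 ≤ i ≤ n, d+1 ≤ l ≤ m. -/

import Mathlib

/-- The sequence `m_j`: `m_0 = m_1 = 2`, `m_{j+1} = m_j^3`. -/
def mseq : ℕ → ℕ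
  | 0 => 2
  | 1 => 2
  | (j+2) => (mseq (j+1)) ^ 3

/-- Membership in the set `Σ` of candidate special sequences: a nonempty finite list of
pairs `(E_i, j_i)` with the `E_i` pairwise disjoint nonempty finite sets, the `j_i`
strictly increasing, `j_1 ∈ N_1` and `j_i ∈ N_2` for `i > 1`. -/
def InSigma (N1 N2 : Set ℕ) (l : List (Finset ℕ × ℕ)) : Prop :=
  l ≠ [] ∧
  l.Pairwise (fun a b => Disjoint a.1 b.1) ∧
  l.Chain' (fun a b => a.2 < b.2) ∧
  (∀ a ∈ l.head?, a.2 ∈ N1) ∧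
  (∀ a ∈ l.tail, a.2 ∈ N2) ∧
  (∀ a ∈ l, a.1.Nonempty)

/-- `l` is a `σ`-special sequence: it lies in `Σ` and `σ` of each proper initial
segment gives the next index. -/
def IsSpecial (N1 N2 : Set ℕ) (σ : List (Finset ℕ × ℕ) → ℕ)
    (l : List (Finset ℕ × ℕ)) : Prop :=
  InSigma N1 N2 l ∧
  ∀ (i : ℕ) (h : i + 1 < l.length), σ (l.take (i + 1)) = (l.get ⟨i + 1, h⟩).2

/-- `σ` is an admissible coding: it maps `Σ` into `N_2`, is injective on `Σ`, its values
dominate the indices appearing in the sequence, and it satisfies the growth condition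
`m_{2σ(s⌢(E,j))} > m_{2σ(s)}·(max E_last)^2`. -/
def GoodCoding (N1 N2 : Set ℕ) (σ : List (Finset ℕ × ℕ) → ℕ) : Prop :=
  (∀ l, InSigma N1 N2 l → σ l ∈ N2) ∧
  (∀ l l', InSigma N1 N2 l → InSigma N1 N2 l' → σ l = σ l' → l = l') ∧
  (∀ l, InSigma N1 N2 l → ∀ a ∈ l, a.2 < σ l) ∧
  (∀ (l : List (Finset ℕ × ℕ)) (a : Finset ℕ × ℕ) (h : l ≠ []),
      InSigma N1 N2 l → InSigma N1 N2 (l ++ [a]) →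
      mseq (2 * σ l) * (sSup {k | k ∈ (l.getLast h).1}) ^ 2 < mseq (2 * σ (l ++ [a])))

lemma inSigma_take {N1 N2 : Set ℕ} {l : List (Finset ℕ × ℕ)}
    (h : InSigma N1 N2 l) {k : ℕ} (hk : 1 ≤ k) : InSigma N1 N2 (l.take k) := by
  obtain ⟨hne, hpw, hch, hhd, htl, hnon⟩ := h
  refine ⟨?_, hpw.sublist (List.take_sublist _ _), hch.take _, ?_, ?_, ?_⟩
  · cases l with
    | nil => exact absurd rfl hne
    | cons a t =>
      cases k with
      | zero => omega
      | succ k => simp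
  · intro a ha
    apply hhd
    cases l with
    | nil => simp at ha
    | cons b t =>
      cases k with
      | zero => omega
      | succ k => simpa using ha
  · intro a ha
    apply htl
    have he : (l.take k).tail = l.tail.take (k-1) := by
      cases l with
      | nil => simp
      | cons b t =>
        cases k with
        | zero => omega
        | succ k => simp
    rw [he] at ha
    exact List.mem_of_mem_take ha
  · intro a ha
    exact hnon a (List.mem_of_mem_take ha)

/-- Indices at tail positions lie in `N2`. -/
lemma index_mem_N2 {N1 N2 : Set ℕ} {l : List (Finset ℕ × ℕ)}
    (h : InSigma N1 N2 l) {j : ℕ} (hj : j + 1 < l.length) :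
    (l.get ⟨j + 1, hj⟩).2 ∈ N2 := by
  apply h.2.2.2.2.1
  have : l.tail[j]'(by simp [List.length_tail]; omega) = l[j+1]'hj := List.getElem_tail _
  rw [List.get_eq_getElem, ← this]
  exact List.getElem_mem _

/-- The head index lies in `N1`. -/
lemma index_mem_N1 {N1 N2 : Set ℕ} {l : List (Finset ℕ × ℕ)}
    (h : InSigma N1 N2 l) (h0 : 0 < l.length) :
    (l.get ⟨0, h0⟩).2 ∈ N1 := by
  apply h.2.2.2.1
  rw [List.head?_eq_getElem?, List.getElem?_eq_getElem h0]
  rfl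

/-- Key diagonality lemma: any collision of indices must occur at the same position,
and the prefixes before that position coincide. -/
lemma key_diag {N1 N2 : Set ℕ} {σ : List (Finset ℕ × ℕ) → ℕ}
    (hdisjN : Disjoint N1 N2) (hσ : GoodCoding N1 N2 σ)
    {l₁ l₂ : List (Finset ℕ × ℕ)}
    (h1 : IsSpecial N1 N2 σ l₁) (h2 : IsSpecial N1 N2 σ l₂)
    {i j : ℕ} (hi : i < l₁.length) (hj : j < l₂.length)
    (heq : (l₁.get ⟨i, hi⟩).2 = (l₂.get ⟨j, hj⟩).2) :
    i = j ∧ l₁.take i = l₂.take j := by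
  match i, j with
  | 0, 0 => exact ⟨rfl, rfl⟩
  | 0, j + 1 =>
    exfalso
    have hN1 := index_mem_N1 h1.1 hi
    have hN2 := index_mem_N2 h2.1 hj
    rw [heq] at hN1
    exact Set.disjoint_left.mp hdisjN hN1 hN2
  | i + 1, 0 =>
    exfalso
    have hN1 := index_mem_N1 h2.1 hj
    have hN2 := index_mem_N2 h1.1 hi
    rw [← heq] at hN1
    exact Set.disjoint_left.mp hdisjN hN1 hN2
  | i + 1, j + 1 =>
    have e1 := h1.2 i hi
    have e2 := h2.2 j hj
    have hσeq : σ (l₁.take (i + 1)) = σ (l₂.take (j + 1)) := by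
      rw [e1, e2, heq]
    have htk : l₁.take (i + 1) = l₂.take (j + 1) :=
      hσ.2.1 _ _ (inSigma_take h1.1 (by omega)) (inSigma_take h2.1 (by omega)) hσeq
    have hlen : i + 1 = j + 1 := by
      have := congrArg List.length htk
      rwa [List.length_take, List.length_take, min_eq_left (by omega),
        min_eq_left (by omega)] at this
    exact ⟨hlen, by rw [htk]⟩

/-- **Tree-like property.** If `l₁` and `l₂` are two `σ`-special
sequences, then either all their indices are distinct, or there is `d` such that the
sequences agree before position `d`, have equal `d`-th index, and all indices strictly
after position `d` are pairwise distinct. -/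
theorem sigma_special_tree_like (N1 N2 : Set ℕ) (σ : List (Finset ℕ × ℕ) → ℕ)
    (hdisjN : Disjoint N1 N2)
    (hσ : GoodCoding N1 N2 σ)
    (l₁ l₂ : List (Finset ℕ × ℕ))
    (h1 : IsSpecial N1 N2 σ l₁) (h2 : IsSpecial N1 N2 σ l₂) :
    (∀ (i : Fin l₁.length) (j : Fin l₂.length), (l₁.get i).2 ≠ (l₂.get j).2) ∨
    ∃ (d : ℕ) (hd1 : d < l₁.length) (hd2 : d < l₂.length),
      l₁.take d = l₂.take d ∧
      (l₁.get ⟨d, hd1⟩).2 = (l₂.get ⟨d, hd2⟩).2 ∧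
      ∀ (i : Fin l₁.length) (j : Fin l₂.length), d < (i : ℕ) → d < (j : ℕ) →
        (l₁.get i).2 ≠ (l₂.get j).2 := by
  classical
  by_cases hcol : ∀ (i : Fin l₁.length) (j : Fin l₂.length), (l₁.get i).2 ≠ (l₂.get j).2
  · exact Or.inl hcol
  · right
    push_neg at hcol
    obtain ⟨i, j, hij⟩ := hcol
    obtain ⟨hij', -⟩ := key_diag hdisjN hσ h1 h2 i.isLt j.isLt hij
    set P : ℕ → Prop := fun d => ∃ (hd1 : d < l₁.length) (hd2 : d < l₂.length),
      (l₁.get ⟨d, hd1⟩).2 = (l₂.get ⟨d, hd2⟩).2 with hP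
    have hPi : P (i : ℕ) := by
      refine ⟨i.isLt, hij' ▸ j.isLt, ?_⟩
      have : (⟨(i : ℕ), hij' ▸ j.isLt⟩ : Fin l₂.length) = j := Fin.ext hij'
      rw [this]
      simpa using hij
    set d := Nat.findGreatest P l₁.length with hd
    have hPd : P d := Nat.findGreatest_spec (le_of_lt i.isLt) hPi
    obtain ⟨hd1, hd2, hdeq⟩ := hPd
    obtain ⟨-, htake⟩ := key_diag hdisjN hσ h1 h2 hd1 hd2 hdeq
    refine ⟨d, hd1, hd2, htake, hdeq, ?_⟩
    intro i' j' hdi hdj hne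
    obtain ⟨hij'', -⟩ := key_diag hdisjN hσ h1 h2 i'.isLt j'.isLt hne
    have hnotP : ¬ P (i' : ℕ) :=
      Nat.findGreatest_is_greatest hdi (le_of_lt i'.isLt)
    exact hnotP ⟨i'.isLt, hij'' ▸ j'.isLt, by
      have : (⟨(i' : ℕ), hij'' ▸ j'.isLt⟩ : Fin l₂.length) = j' := Fin.ext hij''
      rw [this]; simpa using hne⟩
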